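/- arXiv:2106.04958 — 2 statements merged into one kernel-verified Lean document; each statement's English description precedes it below -/
import Mathlib

section
/- Let f : ℝ → ℝ be convex with f(1) = 0, let P and Q be probability measures on a measurable space 𝒳, and let κ be a Markov kernel from 𝒳 to a measurable space 𝒴. If P_{X,Y} = P ⊗ κ and Q_{X,Y} = Q ⊗ κ are the corresponding composition-product measures on 𝒳 × 𝒴, then D_f(P_{X,Y} ‖ Q_{X,Y}) = D_f(P ‖ Q). -/
open MeasureTheory ProbabilityTheory

/-- The `f`-divergence `D_f(P‖Q) = ∫ f(dP/dQ) dQ` between two measures. -/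
noncomputable def fDiv {α : Type*} [MeasurableSpace α] (f : ℝ → ℝ)
    (P Q : Measure α) : ℝ :=
  ∫ x, f ((P.rnDeriv Q) x).toReal ∂Q

lemma compProd_withDensity_aux {𝒳 𝒴 : Type*} [MeasurableSpace 𝒳] [MeasurableSpace 𝒴]
    (Q : Measure 𝒳) [SFinite Q] (κ : Kernel 𝒳 𝒴) [IsSFiniteKernel κ]
    {g : 𝒳 → ENNReal} (hg : Measurable g) :
    (Q.withDensity g) ⊗ₘ κ = (Q ⊗ₘ κ).withDensity (fun p => g p.1) := by
  ext s hs
  rw [Measure.compProd_apply hs, withDensity_apply _ hs,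
    lintegral_withDensity_eq_lintegral_mul _ hg
      (Kernel.measurable_kernel_prodMk_left hs),
    ← lintegral_indicator hs (fun p : 𝒳 × 𝒴 => g p.1),
    Measure.lintegral_compProd (f := s.indicator fun p : 𝒳 × 𝒴 => g p.1) ((hg.comp measurable_fst).indicator hs)]
  congr 1
  ext x
  have h : ∀ y, s.indicator (fun p : 𝒳 × 𝒴 => g p.1) (x, y)
      = (Prod.mk x ⁻¹' s).indicator (fun _ => g x) y := by
    intro y
    by_cases hxy : (x, y) ∈ s <;> simp [Set.indicator, hxy, Set.mem_preimage]
  simp_rw [h]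
  rw [lintegral_indicator_const (measurable_prodMk_left hs)]
  rfl

lemma compProd_mutuallySingular_aux {𝒳 𝒴 : Type*} [MeasurableSpace 𝒳] [MeasurableSpace 𝒴]
    {ν Q : Measure 𝒳} [SFinite ν] [SFinite Q] (h : ν ⟂ₘ Q)
    (κ : Kernel 𝒳 𝒴) [IsMarkovKernel κ] :
    (ν ⊗ₘ κ) ⟂ₘ (Q ⊗ₘ κ) := by
  obtain ⟨t, ht, hνt, hQt⟩ := h
  refine ⟨t ×ˢ Set.univ, ht.prod MeasurableSet.univ, ?_, ?_⟩
  · rw [Measure.compProd_apply (ht.prod MeasurableSet.univ)]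
    have : ∀ x, κ x (Prod.mk x ⁻¹' (t ×ˢ Set.univ)) = t.indicator (fun _ => 1) x := by
      intro x
      by_cases hx : x ∈ t <;> simp [Set.indicator, hx, Set.mk_preimage_prod_left,
        Set.mk_preimage_prod_left_eq_empty]
    simp_rw [this]
    rw [lintegral_indicator_const ht, one_mul]
    exact hνt
  · have hc : (t ×ˢ (Set.univ : Set 𝒴))ᶜ = tᶜ ×ˢ Set.univ := by
      ext p; simp
    rw [hc, Measure.compProd_apply (ht.compl.prod MeasurableSet.univ)]
    have : ∀ x, κ x (Prod.mk x ⁻¹' (tᶜ ×ˢ Set.univ)) = tᶜ.indicator (fun _ => 1) x := by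
      intro x
      by_cases hx : x ∈ tᶜ <;> simp [Set.indicator, hx, Set.mk_preimage_prod_left,
        Set.mk_preimage_prod_left_eq_empty]
    simp_rw [this]
    rw [lintegral_indicator_const ht.compl, one_mul]
    exact hQt

lemma rnDeriv_compProd_aux {𝒳 𝒴 : Type*} [MeasurableSpace 𝒳] [MeasurableSpace 𝒴]
    (P Q : Measure 𝒳) [IsProbabilityMeasure P] [IsProbabilityMeasure Q]
    (κ : Kernel 𝒳 𝒴) [IsMarkovKernel κ] :
    (fun p : 𝒳 × 𝒴 => P.rnDeriv Q p.1) =ᵐ[Q ⊗ₘ κ] (P ⊗ₘ κ).rnDeriv (Q ⊗ₘ κ) := by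
  refine Measure.eq_rnDeriv ((Measure.measurable_rnDeriv P Q).comp measurable_fst)
    (s := (P.singularPart Q) ⊗ₘ κ) (compProd_mutuallySingular_aux
      (Measure.mutuallySingular_singularPart P Q) κ) ?_
  rw [← compProd_withDensity_aux Q κ (Measure.measurable_rnDeriv P Q),
    ← Measure.compProd_add_left, Measure.singularPart_add_rnDeriv]

/-- For a convex `f` with `f 1 = 0`, probability measures `P`, `Q` on `𝒳` and a Markov kernel
`κ` from `𝒳` to `𝒴`, the `f`-divergence between the composition-product measures satisfies
`D_f(P ⊗ κ ‖ Q ⊗ κ) = D_f(P ‖ Q)`. -/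
theorem fDiv_compProd_right {𝒳 𝒴 : Type*} [MeasurableSpace 𝒳] [MeasurableSpace 𝒴]
    (f : ℝ → ℝ) (hf : ConvexOn ℝ Set.univ f) (hf1 : f 1 = 0)
    (P Q : Measure 𝒳) [IsProbabilityMeasure P] [IsProbabilityMeasure Q]
    (κ : Kernel 𝒳 𝒴) [IsMarkovKernel κ] :
    fDiv f (P ⊗ₘ κ) (Q ⊗ₘ κ) = fDiv f P Q := by
  have hfc : Continuous f := by
    rw [← continuousOn_univ]
    exact hf.continuousOn isOpen_univ
  have h1 : fDiv f (P ⊗ₘ κ) (Q ⊗ₘ κ)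
      = ∫ p, f ((P.rnDeriv Q p.1).toReal) ∂(Q ⊗ₘ κ) := by
    refine integral_congr_ae ?_
    filter_upwards [rnDeriv_compProd_aux P Q κ] with p hp
    rw [← hp]
  rw [h1]
  have h2 : (Q ⊗ₘ κ).map Prod.fst = Q := Measure.fst_compProd Q κ
  have hmeas : Measurable fun x => f ((P.rnDeriv Q x).toReal) :=
    hfc.measurable.comp ((Measure.measurable_rnDeriv P Q).ennreal_toReal)
  calc ∫ p, f ((P.rnDeriv Q p.1).toReal) ∂(Q ⊗ₘ κ)
      = ∫ x, f ((P.rnDeriv Q x).toReal) ∂((Q ⊗ₘ κ).map Prod.fst) := by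
        rw [integral_map measurable_fst.aemeasurable hmeas.aestronglyMeasurable]
    _ = fDiv f P Q := by rw [h2]; rfl
end

section
/- Let A be a real M×N matrix with M ≥ 1 such that A·Aᵀ is invertible (so the Moore–Penrose pseudoinverse of Aᵀ is (Aᵀ)† = (AAᵀ)⁻¹A), and let σ ≥ 0 satisfy ‖Aᵀ v‖ ≥ σ‖v‖ for all v ∈ ℝᴹ. Then for every a ∈ ℝᴺ and every β in the standard simplex Δ_M, one has ‖Aᵀβ − a‖² ≥ σ²·(1 − 𝟙ᵀ(AAᵀ)⁻¹A a)²/M + ‖(I − Aᵀ(AAᵀ)⁻¹A) a‖², where 𝟙 ∈ ℝᴹ is the all-ones vector. Consequently the response diversity min_{β∈Δ_M} ‖Aᵀβ − a‖² is bounded below by this quantity. -/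
open Matrix Finset

/-- The Euclidean norm on `Fin n → ℝ`. -/
noncomputable def euclidEnorm {n : ℕ} (v : Fin n → ℝ) : ℝ :=
  Real.sqrt (∑ i, v i ^ 2)

lemma euclidEnorm_sq {n : ℕ} (v : Fin n → ℝ) : euclidEnorm v ^ 2 = ∑ i, v i ^ 2 := by
  rw [euclidEnorm, Real.sq_sqrt]; positivity

/-- Theorem 2 of the paper: for an empirical payoff matrix `A ∈ ℝ^{M×N}` with `M ≥ 1` and
`A * Aᵀ` invertible, a lower singular-value bound `σ` for `Aᵀ`, a payoff vector `a ∈ ℝᴺ`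
and any mixture `β` in the standard simplex,
`‖Aᵀβ − a‖² ≥ σ²(1 − 𝟙ᵀ(AAᵀ)⁻¹A a)²/M + ‖(I − Aᵀ(AAᵀ)⁻¹A) a‖²`.
Hence this quantity lower-bounds the response diversity `min_{β∈Δ_M} ‖Aᵀβ − a‖²`. -/
theorem divRew_lower_bound {M N : ℕ} (hM : 1 ≤ M)
    (A : Matrix (Fin M) (Fin N) ℝ) (hA : IsUnit (A * Aᵀ).det)
    (σ : ℝ) (hσ : 0 ≤ σ)
    (hσA : ∀ v : Fin M → ℝ, σ * euclidEnorm v ≤ euclidEnorm (Aᵀ.mulVec v))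
    (a : Fin N → ℝ) (β : Fin M → ℝ) (hβ : β ∈ stdSimplex ℝ (Fin M)) :
    σ ^ 2 * (1 - ∑ k, ((A * Aᵀ)⁻¹ * A).mulVec a k) ^ 2 / (M : ℝ)
      + euclidEnorm ((1 - Aᵀ * (A * Aᵀ)⁻¹ * A).mulVec a) ^ 2
    ≤ euclidEnorm (Aᵀ.mulVec β - a) ^ 2 := by
  have hMpos : (0 : ℝ) < M := by exact_mod_cast Nat.lt_of_lt_of_le Nat.zero_lt_one hM
  set w : Fin M → ℝ := ((A * Aᵀ)⁻¹ * A).mulVec a with hw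
  set v : Fin M → ℝ := β - w with hv
  -- A (Aᵀ w) = A a
  have hAp : A.mulVec (Aᵀ.mulVec w) = A.mulVec a := by
    rw [hw, Matrix.mulVec_mulVec, Matrix.mulVec_mulVec, ← Matrix.mul_assoc,
      Matrix.mul_nonsing_inv _ hA, Matrix.one_mul]
  set d : Fin N → ℝ := Aᵀ.mulVec w - a with hd
  -- orthogonality
  have horth : (Aᵀ.mulVec v) ⬝ᵥ d = 0 := by
    rw [Matrix.mulVec_transpose, ← Matrix.dotProduct_mulVec, hd,
      Matrix.mulVec_sub, hAp, sub_self, dotProduct_zero]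
  -- decomposition
  have hdec : Aᵀ.mulVec β - a = Aᵀ.mulVec v + d := by
    rw [hv, Matrix.mulVec_sub, hd]; ring
  -- Pythagoras
  have hpyth : euclidEnorm (Aᵀ.mulVec β - a) ^ 2 = euclidEnorm (Aᵀ.mulVec v) ^ 2 + euclidEnorm d ^ 2 := by
    rw [hdec, euclidEnorm_sq, euclidEnorm_sq, euclidEnorm_sq]
    have : (∑ i, (Aᵀ.mulVec v i + d i) ^ 2)
        = (∑ i, (Aᵀ.mulVec v) i ^ 2) + 2 * ((Aᵀ.mulVec v) ⬝ᵥ d) + ∑ i, d i ^ 2 := by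
      rw [dotProduct, Finset.mul_sum, ← Finset.sum_add_distrib, ← Finset.sum_add_distrib]
      exact Finset.sum_congr rfl fun i _ => by ring
    simp only [Pi.add_apply] at this ⊢
    rw [this, horth]; ring
  -- the residual term
  have hres : euclidEnorm ((1 - Aᵀ * (A * Aᵀ)⁻¹ * A).mulVec a) ^ 2 = euclidEnorm d ^ 2 := by
    rw [euclidEnorm_sq, euclidEnorm_sq]
    refine Finset.sum_congr rfl fun i _ => ?_
    have : (1 - Aᵀ * (A * Aᵀ)⁻¹ * A).mulVec a = a - Aᵀ.mulVec w := by
      rw [Matrix.sub_mulVec, Matrix.one_mulVec, hw, Matrix.mul_assoc,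
        ← Matrix.mulVec_mulVec]
    rw [this, hd]
    simp only [Pi.sub_apply]
    ring
  -- sum of v
  have hsumv : ∑ k, v k = 1 - ∑ k, w k := by
    simp only [hv, Pi.sub_apply, Finset.sum_sub_distrib, hβ.2]
  -- Cauchy-Schwarz bound
  have hcs : (1 - ∑ k, w k) ^ 2 / (M : ℝ) ≤ ∑ k, v k ^ 2 := by
    rw [div_le_iff₀ hMpos, ← hsumv]
    calc (∑ k, v k) ^ 2 ≤ ((#(Finset.univ (α := Fin M)) : ℕ) : ℝ) * ∑ k, v k ^ 2 :=
          sq_sum_le_card_mul_sum_sq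
      _ = (∑ k, v k ^ 2) * M := by
          rw [Finset.card_univ, Fintype.card_fin]; ring
  -- singular value bound
  have hsv : σ ^ 2 * (∑ k, v k ^ 2) ≤ euclidEnorm (Aᵀ.mulVec v) ^ 2 := by
    have h1 : (σ * euclidEnorm v) ^ 2 ≤ euclidEnorm (Aᵀ.mulVec v) ^ 2 := by
      refine pow_le_pow_left₀ (mul_nonneg hσ ?_) (hσA v) 2
      exact Real.sqrt_nonneg _
    rw [mul_pow, euclidEnorm_sq] at h1
    exact h1
  have hmain : σ ^ 2 * (1 - ∑ k, w k) ^ 2 / (M : ℝ) ≤ euclidEnorm (Aᵀ.mulVec v) ^ 2 := by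
    calc σ ^ 2 * (1 - ∑ k, w k) ^ 2 / (M : ℝ)
        = σ ^ 2 * ((1 - ∑ k, w k) ^ 2 / (M : ℝ)) := by ring
      _ ≤ σ ^ 2 * (∑ k, v k ^ 2) := by
          exact mul_le_mul_of_nonneg_left hcs (by positivity)
      _ ≤ euclidEnorm (Aᵀ.mulVec v) ^ 2 := hsv
  rw [hpyth, hres]
  exact add_le_add_left hmain _
end
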